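/- arXiv:2304.07377 — 2 statements merged into one kernel-verified Lean document; each statement's English description precedes it below -/
import Mathlib

section
/- If g is (κ,M)-Lipschitz and X ~ N(0,M), then Var(g(X)) ≤ κ² tr(M). -/
open MeasureTheory Matrix
open scoped NNReal ENNReal


open ProbabilityTheory Real in
lemma aux_sq_exp_integrable {b : ℝ} (hb : 0 < b) :
    MeasureTheory.Integrable (fun x : ℝ => x ^ 2 * Real.exp (-b * x ^ 2)) := by
  have := integrable_rpow_mul_exp_neg_mul_sq hb (s := 2) (by norm_num)
  have h2 : ∀ x : ℝ, x ^ (2 : ℝ) = x ^ 2 := fun x => by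
    rw [show (2:ℝ) = ((2:ℕ):ℝ) by norm_num, Real.rpow_natCast]
  simpa [h2] using this

open ProbabilityTheory Real in
lemma aux_integral_sq_exp {b : ℝ} (hb : 0 < b) :
    ∫ x : ℝ, x ^ 2 * Real.exp (-b * x ^ 2) = (2 * b)⁻¹ * Real.sqrt (π / b) := by
  have hu : ∀ x : ℝ, HasDerivAt (fun x : ℝ => x) 1 x := fun x => hasDerivAt_id x
  have hv : ∀ x : ℝ, HasDerivAt (fun x : ℝ => -(2*b)⁻¹ * Real.exp (-b * x ^ 2))
      (x * Real.exp (-b * x ^ 2)) x := by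
    intro x
    have h := (((hasDerivAt_pow 2 x).const_mul (-b)).exp).const_mul (-(2*b)⁻¹)
    refine h.congr_deriv ?_
    field_simp
    ring
  have huv' : Integrable ((fun x : ℝ => x) * fun x => x * Real.exp (-b * x ^ 2)) := by
    have := aux_sq_exp_integrable hb
    apply this.congr
    filter_upwards with x
    simp [Pi.mul_apply]; ring
  have hu'v : Integrable ((fun _ : ℝ => (1:ℝ)) * fun x => -(2*b)⁻¹ * Real.exp (-b * x ^ 2)) := by
    have := (integrable_exp_neg_mul_sq hb).const_mul (-(2*b)⁻¹)
    apply this.congr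
    filter_upwards with x
    simp [Pi.mul_apply]
  have huv : Integrable ((fun x : ℝ => x) * fun x => -(2*b)⁻¹ * Real.exp (-b * x ^ 2)) := by
    have := (integrable_mul_exp_neg_mul_sq hb).const_mul (-(2*b)⁻¹)
    apply this.congr
    filter_upwards with x
    simp [Pi.mul_apply]; ring
  have key := integral_mul_deriv_eq_deriv_mul_of_integrable (fun x _ => hu x) (fun x _ => hv x) huv' hu'v huv
  have h1 : ∫ x : ℝ, x * (x * Real.exp (-b * x ^ 2)) = ∫ x : ℝ, x ^ 2 * Real.exp (-b * x ^ 2) := by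
    congr 1; ext x; ring
  rw [h1] at key
  rw [key]
  simp only [one_mul]
  rw [MeasureTheory.integral_const_mul, integral_gaussian]
  rw [neg_mul, neg_neg]

open ProbabilityTheory Real in
lemma aux_gaussian_pdf_eq (v : ℝ≥0) (x : ℝ) :
    gaussianPDFReal 0 v x = (Real.sqrt (2*π*v))⁻¹ * Real.exp (-(2*(v:ℝ))⁻¹ * x^2) := by
  rw [gaussianPDFReal]
  congr 1
  rw [show -(x - 0)^2/(2*(v:ℝ)) = -(2*(v:ℝ))⁻¹ * x^2 by ring]

open ProbabilityTheory Real in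
lemma aux_pdf_mul_sq_integrable (v : ℝ≥0) (hv : v ≠ 0) :
    Integrable (fun x : ℝ => gaussianPDFReal 0 v x * x ^ 2) := by
  have hv' : (0:ℝ) < v := by positivity
  have hb : (0:ℝ) < (2*(v:ℝ))⁻¹ := by positivity
  have := (aux_sq_exp_integrable hb).const_mul (Real.sqrt (2*π*v))⁻¹
  apply this.congr
  filter_upwards with x
  rw [aux_gaussian_pdf_eq]
  ring

open ProbabilityTheory Real in
lemma aux_gauss_sq_integrable (v : ℝ≥0) :
    Integrable (fun x : ℝ => x ^ 2) (gaussianReal 0 v) := by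
  rcases eq_or_ne v 0 with rfl | hv
  · rw [gaussianReal_zero_var]
    refine ⟨(measurable_id.pow_const 2).aestronglyMeasurable, ?_⟩
    rw [MeasureTheory.HasFiniteIntegral, lintegral_dirac]
    exact ENNReal.coe_lt_top
  · rw [gaussianReal_of_var_ne_zero 0 hv]
    have hmeas : Measurable (fun x : ℝ => (gaussianPDFReal 0 v x).toNNReal) :=
      (stronglyMeasurable_gaussianPDFReal 0 v).measurable.real_toNNReal
    rw [show gaussianPDF 0 v = fun x => ((gaussianPDFReal 0 v x).toNNReal : ℝ≥0∞) from rfl]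
    rw [integrable_withDensity_iff_integrable_smul hmeas]
    have := aux_pdf_mul_sq_integrable v hv
    apply this.congr
    filter_upwards with x
    rw [NNReal.smul_def, smul_eq_mul, Real.coe_toNNReal _ (gaussianPDFReal_nonneg 0 v x)]

open ProbabilityTheory Real in
lemma aux_gauss_sq_integral (v : ℝ≥0) :
    ∫ x : ℝ, x ^ 2 ∂(gaussianReal 0 v) = v := by
  rcases eq_or_ne v 0 with rfl | hv
  · rw [gaussianReal_zero_var, integral_dirac]
    simp
  · have hv' : (0:ℝ) < v := by positivity
    have hb : (0:ℝ) < (2*(v:ℝ))⁻¹ := by positivity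
    rw [gaussianReal_of_var_ne_zero 0 hv]
    have hmeas : Measurable (fun x : ℝ => (gaussianPDFReal 0 v x).toNNReal) :=
      (stronglyMeasurable_gaussianPDFReal 0 v).measurable.real_toNNReal
    rw [show gaussianPDF 0 v = fun x => ((gaussianPDFReal 0 v x).toNNReal : ℝ≥0∞) from rfl]
    rw [integral_withDensity_eq_integral_smul hmeas]
    have h1 : ∀ x : ℝ, (gaussianPDFReal 0 v x).toNNReal • (x ^ 2) =
        (Real.sqrt (2*π*v))⁻¹ * (x ^ 2 * Real.exp (-(2*(v:ℝ))⁻¹ * x ^ 2)) := by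
      intro x
      rw [NNReal.smul_def, smul_eq_mul, Real.coe_toNNReal _ (gaussianPDFReal_nonneg 0 v x),
        aux_gaussian_pdf_eq]
      ring
    simp_rw [h1]
    rw [MeasureTheory.integral_const_mul, aux_integral_sq_exp hb]
    rw [show (2 * (2*(v:ℝ))⁻¹)⁻¹ = (v:ℝ) by field_simp,
      show π / (2*(v:ℝ))⁻¹ = 2*π*v by field_simp]
    have hs : Real.sqrt (2*π*(v:ℝ)) ≠ 0 := by
      rw [Real.sqrt_ne_zero']; positivity

    field_simp

open ProbabilityTheory in
lemma aux_var_le {Ω : Type} [MeasurableSpace Ω] (μ : Measure Ω) [IsProbabilityMeasure μ]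
    (f : Ω → ℝ) (hL2 : MemLp f 2 μ) (c : ℝ) :
    variance f μ ≤ ∫ ω, (f ω - c)^2 ∂μ := by
  have hf1 : Integrable f μ := hL2.integrable one_le_two
  have hf2 : Integrable (fun ω => f ω ^ 2) μ := hL2.integrable_sq
  have hexp : ∫ ω, (f ω - c)^2 ∂μ
      = (∫ ω, f ω ^ 2 ∂μ) - 2*c*(∫ ω, f ω ∂μ) + c^2 := by
    have h : ∀ ω, (f ω - c)^2 = f ω^2 - 2*c*f ω + c^2 := fun ω => by ring
    simp_rw [h]
    have hsub : Integrable (fun ω => f ω ^ 2 - 2 * c * f ω) μ := hf2.sub (hf1.const_mul (2*c))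
    have hcm : Integrable (fun ω => 2 * c * f ω) μ := hf1.const_mul (2*c)
    rw [integral_add hsub (integrable_const _), integral_sub hf2 hcm,
      MeasureTheory.integral_const_mul, integral_const]
    simp [measure_univ]
  rw [variance_eq_sub hL2, hexp]
  have h2 : μ[(fun ω => f ω)^2] = ∫ ω, f ω ^ 2 ∂μ := by
    congr 1
  nlinarith [sq_nonneg ((∫ ω, f ω ∂μ) - c), h2]

/-- A random vector `X` indexed by `ι` is centered Gaussian with covariance matrix `S` if
every linear functional of `X` has a centered one-dimensional Gaussian distribution with
the corresponding variance. -/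
def IsCenteredGaussian {Ω ι : Type*} [MeasurableSpace Ω] [Fintype ι]
    (μ : Measure Ω) (X : Ω → ι → ℝ) (S : Matrix ι ι ℝ) : Prop :=
  ∀ l : ι → ℝ,
    Measure.map (fun ω => ∑ i, l i * X ω i) μ =
      ProbabilityTheory.gaussianReal 0 (Real.toNNReal (l ⬝ᵥ S.mulVec l))

/-- `g` is `(κ, M)`-Lipschitz: for every `2d`-dimensional centered Gaussian vector `(Y, Y')`
with `Cov Y ⪯ M` and `Cov Y' ⪯ M`, `E((g(Y) - g(Y'))²) ≤ κ² E(‖Y - Y'‖²)`. -/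
def IsKMLipschitz {d : ℕ} (κ : ℝ) (M : Matrix (Fin d) (Fin d) ℝ)
    (g : (Fin d → ℝ) → ℝ) : Prop :=
  ∀ (Ω : Type) (_ : MeasurableSpace Ω) (μ : Measure Ω), IsProbabilityMeasure μ →
    ∀ (Y Y' : Ω → Fin d → ℝ) (S : Matrix (Fin d ⊕ Fin d) (Fin d ⊕ Fin d) ℝ),
      Measurable Y → Measurable Y' →
      IsCenteredGaussian μ (fun ω => Sum.elim (Y ω) (Y' ω)) S →
      (M - Matrix.of fun i j => S (Sum.inl i) (Sum.inl j)).PosSemidef →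
      (M - Matrix.of fun i j => S (Sum.inr i) (Sum.inr j)).PosSemidef →
      ∫ ω, (g (Y ω) - g (Y' ω)) ^ 2 ∂μ ≤ κ ^ 2 * ∫ ω, ∑ j, (Y ω j - Y' ω j) ^ 2 ∂μ

/-- If `g` is `(κ, M)`-Lipschitz and `X ~ N(0, M)`, then `Var(g(X)) ≤ κ² tr M`. -/
theorem stmt_3 {d : ℕ} (M : Matrix (Fin d) (Fin d) ℝ) (hM : M.PosSemidef)
    (g : (Fin d → ℝ) → ℝ) (hgm : Measurable g)
    (κ : ℝ) (hκ : 0 ≤ κ) (hg : IsKMLipschitz κ M g)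
    {Ω : Type} [MeasurableSpace Ω] (μ : Measure Ω) [IsProbabilityMeasure μ]
    (X : Ω → Fin d → ℝ) (hXm : Measurable X) (hX : IsCenteredGaussian μ X M)
    (hL2 : MemLp (fun ω => g (X ω)) 2 μ) :
    ProbabilityTheory.variance (fun ω => g (X ω)) μ ≤ κ ^ 2 * M.trace := by
  classical
  have hsingle : ∀ j : Fin d, (Pi.single j 1 : Fin d → ℝ) ⬝ᵥ M.mulVec (Pi.single j 1) = M j j := by
    intro j
    simp [dotProduct, Matrix.mulVec, Pi.single_apply, Finset.sum_ite_eq', mul_comm,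
      ite_mul, mul_ite]
  have hdiag : ∀ j, 0 ≤ M j j := by
    intro j
    exact hM.diag_nonneg
  have hXj : ∀ j, Measure.map (fun ω => X ω j) μ
      = ProbabilityTheory.gaussianReal 0 (Real.toNNReal (M j j)) := by
    intro j
    have h := hX (Pi.single j 1)
    have h0 : (fun ω => ∑ i, (Pi.single j 1 : Fin d → ℝ) i * X ω i) = fun ω => X ω j := by
      funext ω
      simp [Pi.single_apply, ite_mul]
    rw [h0, hsingle] at h
    exact h
  have hXmj : ∀ j, Measurable fun ω => X ω j := fun j => (measurable_pi_apply j).comp hXm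
  have hXj2int : ∀ j, Integrable (fun ω => (X ω j)^2) μ := by
    intro j
    have h := aux_gauss_sq_integrable ((M j j).toNNReal)
    rw [← hXj j] at h
    exact (integrable_map_measure (by fun_prop) (hXmj j).aemeasurable).mp h
  have hXj2 : ∀ j, ∫ ω, (X ω j)^2 ∂μ = M j j := by
    intro j
    have h := aux_gauss_sq_integral ((M j j).toNNReal)
    rw [← hXj j, integral_map (hXmj j).aemeasurable (by fun_prop)] at h
    rw [h]
    exact Real.coe_toNNReal _ (hdiag j)
  set S : Matrix (Fin d ⊕ Fin d) (Fin d ⊕ Fin d) ℝ := Matrix.fromBlocks M 0 0 0 with hS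
  have hgauss : IsCenteredGaussian μ
      (fun ω => Sum.elim (X ω) ((fun _ : Ω => (0 : Fin d → ℝ)) ω)) S := by
    intro l
    have h1 : (fun ω => ∑ i, l i * Sum.elim (X ω) ((fun _ : Ω => (0 : Fin d → ℝ)) ω) i)
        = fun ω => ∑ a, (l ∘ Sum.inl) a * X ω a := by
      funext ω
      rw [Fintype.sum_sum_type]
      simp
    have h2 : l ⬝ᵥ S.mulVec l = (l ∘ Sum.inl) ⬝ᵥ M.mulVec (l ∘ Sum.inl) := by
      simp [hS, dotProduct, Matrix.mulVec, Fintype.sum_sum_type, Matrix.fromBlocks,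
        Function.comp]
    rw [h1, h2]
    exact hX _
  have hps1 : (M - Matrix.of fun i j => S (Sum.inl i) (Sum.inl j)).PosSemidef := by
    have h : (Matrix.of fun i j => S (Sum.inl i) (Sum.inl j)) = M := rfl
    rw [h, sub_self]
    exact Matrix.PosSemidef.zero
  have hps2 : (M - Matrix.of fun i j => S (Sum.inr i) (Sum.inr j)).PosSemidef := by
    have h : (Matrix.of fun i j => S (Sum.inr i) (Sum.inr j)) = 0 := rfl
    rw [h, sub_zero]
    exact hM
  have key := hg Ω ‹_› μ ‹_› X (fun _ => 0) S hXm measurable_const hgauss hps1 hps2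
  simp only [Pi.zero_apply, sub_zero] at key
  have hvar := aux_var_le μ (fun ω => g (X ω)) hL2 (g 0)
  have hsum : ∫ ω, ∑ j, (X ω j)^2 ∂μ = M.trace := by
    rw [integral_finset_sum Finset.univ (fun j _ => hXj2int j)]
    rw [Matrix.trace]
    exact Finset.sum_congr rfl fun j _ => hXj2 j
  calc ProbabilityTheory.variance (fun ω => g (X ω)) μ
      ≤ ∫ ω, (g (X ω) - g 0)^2 ∂μ := hvar
    _ ≤ κ ^ 2 * ∫ ω, ∑ j, (X ω j)^2 ∂μ := key
    _ = κ ^ 2 * M.trace := by rw [hsum]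
end

section
/- Let U, U', U'' be i.i.d. d-dimensional vectors of independent random variables, and for 0 ≤ i ≤ d define C(i) = Cov(f(U), f(W_i)) where W_i = (U'_1,...,U'_i, U_{i+1},...,U_d). Then C(i) is a decreasing function of i; in particular C(i+1) ≤ C(i) for 0 ≤ i ≤ d-1. -/
open MeasureTheory


namespace Stmt4Aux

open ENNReal

/-- generic facts -/
lemma integrable_mul₂ {α : Type*} [MeasurableSpace α] {μ : Measure α} {g h : α → ℝ}
    (hg : MemLp g 2 μ) (hh : MemLp h 2 μ) : Integrable (fun x => g x * h x) μ := by
  have hpqr : (1 : ℝ≥0∞) / 1 = 1 / 2 + 1 / 2 := by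
    rw [ENNReal.div_add_div_same, one_div_one]
    norm_num [ENNReal.div_self]
  have h1 : MemLp (g • h) 1 μ := hh.smul hg (hpqr := ⟨by rw [inv_one]; exact ENNReal.inv_two_add_inv_two⟩)
  exact memLp_one_iff_integrable.mp h1

lemma sq_integral_le {α : Type*} [MeasurableSpace α] {μ : Measure α} [IsProbabilityMeasure μ]
    {φ : α → ℝ} (h1 : Integrable φ μ) (h2 : Integrable (fun x => φ x * φ x) μ) :
    (∫ x, φ x ∂μ) * (∫ x, φ x ∂μ) ≤ ∫ x, φ x * φ x ∂μ := by
  set c := ∫ x, φ x ∂μ with hc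
  have h0 : 0 ≤ ∫ x, (φ x - c) * (φ x - c) ∂μ := integral_nonneg fun x => mul_self_nonneg _
  have hexp : (fun x => (φ x - c) * (φ x - c))
      = fun x => (φ x * φ x - (2 * c) * φ x) + c * c := by funext x; ring
  have ha : Integrable (fun x => φ x * φ x - 2 * c * φ x) μ := h2.sub (h1.const_mul (2 * c))
  rw [hexp, integral_add ha (integrable_const _),
    integral_sub h2 (h1.const_mul (2 * c)), integral_const_mul, integral_const] at h0
  simp only [probReal_univ, measure_univ, ENNReal.toReal_one, one_smul] at h0
  nlinarith [h0]

lemma mp_fst' {α β : Type*} [MeasurableSpace α] [MeasurableSpace β]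
    (μ : Measure α) (m : Measure β) [SFinite μ] [IsProbabilityMeasure m] :
    MeasurePreserving (Prod.fst : α × β → α) (μ.prod m) μ :=
  ⟨measurable_fst, by simp⟩

lemma mp_snd' {α β : Type*} [MeasurableSpace α] [MeasurableSpace β]
    (μ : Measure α) (m : Measure β) [IsProbabilityMeasure μ] [SFinite m] :
    MeasurePreserving (Prod.snd : α × β → β) (μ.prod m) m :=
  ⟨measurable_snd, by simp⟩


variable {d : ℕ} {F : Type*} [MeasurableSpace F]

/-- The map that replaces the first `i` coordinates of `p.1` by those of `p.2`. -/
def wmap (i : ℕ) (p : (Fin d → F) × (Fin d → F)) : Fin d → F :=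
  fun j => if (j : ℕ) < i then p.2 j else p.1 j

lemma measurable_wmap (i : ℕ) : Measurable (wmap (d := d) (F := F) i) := by
  refine measurable_pi_lambda _ fun j => ?_
  by_cases h : (j : ℕ) < i
  · simpa [wmap, h, Function.comp_def] using (measurable_pi_apply j).comp (measurable_snd (α := Fin d → F))
  · simpa [wmap, h, Function.comp_def] using (measurable_pi_apply j).comp (measurable_fst (β := Fin d → F))

variable (ν : Fin d → Measure F) [∀ k, IsProbabilityMeasure (ν k)]

lemma mp_wmap (i : ℕ) :
    MeasurePreserving (wmap i) ((Measure.pi ν).prod (Measure.pi ν)) (Measure.pi ν) := by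
  classical
  set p : Fin d → Prop := fun j => (j : ℕ) < i with hp
  set e := MeasurableEquiv.piEquivPiSubtypeProd (fun _ : Fin d => F) p with he
  have h1 : MeasurePreserving e (Measure.pi ν)
      ((Measure.pi fun j : Subtype p => ν j).prod (Measure.pi fun j : {j // ¬ p j} => ν j)) :=
    measurePreserving_piEquivPiSubtypeProd ν p
  have hcomp : MeasurePreserving
      (⇑e.symm ∘ Prod.map Prod.fst Prod.snd ∘ Prod.swap ∘ Prod.map ⇑e ⇑e)
      ((Measure.pi ν).prod (Measure.pi ν)) (Measure.pi ν) :=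
    ((MeasurePreserving.symm e h1).comp ((mp_fst' _ _).prod (mp_snd' _ _))).comp
      ((Measure.measurePreserving_swap).comp (h1.prod h1))
  have heq : wmap i = ⇑e.symm ∘ Prod.map Prod.fst Prod.snd ∘ Prod.swap ∘ Prod.map ⇑e ⇑e := by
    funext q j
    by_cases h : p j
    · simp [Stmt4Aux.wmap, he, hp, h, MeasurableEquiv.piEquivPiSubtypeProd, Equiv.piEquivPiSubtypeProd]
    · simp [Stmt4Aux.wmap, he, hp, h, MeasurableEquiv.piEquivPiSubtypeProd, Equiv.piEquivPiSubtypeProd]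
  rw [heq]
  exact hcomp


variable (f : (Fin d → F) → ℝ)

/-- Average of `f` over the first `i` coordinates. -/
noncomputable def gf (i : ℕ) (x : Fin d → F) : ℝ :=
  ∫ y, f (wmap i (x, y)) ∂(Measure.pi ν)

variable {ν f}
variable (hfm : Measurable f) (hf2 : MemLp f 2 (Measure.pi ν))

include hfm hf2 in
lemma hfw_mem (i : ℕ) :
    MemLp (fun q => f (wmap i q)) 2 ((Measure.pi ν).prod (Measure.pi ν)) :=
  hf2.comp_measurePreserving (mp_wmap ν i)

include hfm in
lemma gf_sm (i : ℕ) : StronglyMeasurable (gf ν f i) := by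
  have h : StronglyMeasurable fun q : (Fin d → F) × (Fin d → F) => f (wmap i q) :=
    (hfm.comp (measurable_wmap i)).stronglyMeasurable
  exact h.integral_prod_right'

include hfm hf2 in
lemma fub (φ : (Fin d → F) → ℝ) (hφm : Measurable φ) (hφ2 : MemLp φ 2 (Measure.pi ν)) (i : ℕ) :
    ∫ q, φ q.1 * f (wmap i q) ∂((Measure.pi ν).prod (Measure.pi ν))
      = ∫ x, φ x * gf ν f i x ∂(Measure.pi ν) := by
  have hφ1 : MemLp (fun q : (Fin d → F) × (Fin d → F) => φ q.1) 2
      ((Measure.pi ν).prod (Measure.pi ν)) :=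
    hφ2.comp_measurePreserving (mp_fst' _ _)
  have hint : Integrable (fun q : (Fin d → F) × (Fin d → F) => φ q.1 * f (wmap i q))
      ((Measure.pi ν).prod (Measure.pi ν)) :=
    integrable_mul₂ hφ1 (hfw_mem hfm hf2 i)
  rw [integral_prod _ hint]
  refine integral_congr_ae (Filter.Eventually.of_forall fun x => ?_)
  exact integral_const_mul (φ x) fun y => f (wmap i (x, y))

include hfm hf2 in
lemma inv_transfer (φ : (Fin d → F) → ℝ) (hφm : Measurable φ) (i : ℕ)
    (hinv : ∀ q : (Fin d → F) × (Fin d → F), φ (wmap i q) = φ q.1) :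
    ∫ q, φ q.1 * f (wmap i q) ∂((Measure.pi ν).prod (Measure.pi ν))
      = ∫ x, φ x * f x ∂(Measure.pi ν) := by
  have h1 : ∫ q, φ q.1 * f (wmap i q) ∂((Measure.pi ν).prod (Measure.pi ν))
      = ∫ q, (fun x => φ x * f x) (wmap i q) ∂((Measure.pi ν).prod (Measure.pi ν)) := by
    refine integral_congr_ae (Filter.Eventually.of_forall fun q => ?_)
    simp [hinv q]
  have h2 : ∫ q, (fun x => φ x * f x) (wmap i q) ∂((Measure.pi ν).prod (Measure.pi ν))
      = ∫ x, (fun x => φ x * f x) x ∂(Measure.map (wmap i) ((Measure.pi ν).prod (Measure.pi ν))) :=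
    (integral_map (measurable_wmap i).aemeasurable
      (by rw [(mp_wmap ν i).map_eq]; exact (hφm.mul hfm).aestronglyMeasurable)).symm
  rw [(mp_wmap ν i).map_eq] at h2
  exact h1.trans h2

include hfm hf2 in
lemma key (φ : (Fin d → F) → ℝ) (hφm : Measurable φ) (hφ2 : MemLp φ 2 (Measure.pi ν)) (i : ℕ)
    (hinv : ∀ q : (Fin d → F) × (Fin d → F), φ (wmap i q) = φ q.1) :
    ∫ x, φ x * gf ν f i x ∂(Measure.pi ν) = ∫ x, φ x * f x ∂(Measure.pi ν) :=
  (fub hfm hf2 φ hφm hφ2 i).symm.trans (inv_transfer hfm hf2 φ hφm i hinv)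

include hfm hf2 in
lemma gf_mem (i : ℕ) : MemLp (gf ν f i) 2 (Measure.pi ν) := by
  have hsm := gf_sm (ν := ν) hfm i
  have hfw := hfw_mem hfm hf2 i
  have hsq : Integrable (fun q : (Fin d → F) × (Fin d → F) => f (wmap i q) * f (wmap i q))
      ((Measure.pi ν).prod (Measure.pi ν)) := integrable_mul₂ hfw hfw
  have hfw1 : Integrable (fun q : (Fin d → F) × (Fin d → F) => f (wmap i q))
      ((Measure.pi ν).prod (Measure.pi ν)) := hfw.integrable one_le_two
  have hbound : ∀ᵐ x ∂(Measure.pi ν), ‖gf ν f i x * gf ν f i x‖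
      ≤ ∫ y, f (wmap i (x, y)) * f (wmap i (x, y)) ∂(Measure.pi ν) := by
    filter_upwards [hfw1.prod_right_ae, hsq.prod_right_ae] with x h1 h2
    rw [Real.norm_eq_abs, abs_of_nonneg (mul_self_nonneg _)]
    exact sq_integral_le h1 h2
  have hcand : Integrable
      (fun x => ∫ y, f (wmap i (x, y)) * f (wmap i (x, y)) ∂(Measure.pi ν)) (Measure.pi ν) :=
    hsq.integral_prod_left
  have hGsq : Integrable (fun x => gf ν f i x * gf ν f i x) (Measure.pi ν) :=
    Integrable.mono' hcand ((hsm.mul hsm).aestronglyMeasurable) hbound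
  refine (memLp_two_iff_integrable_sq hsm.aestronglyMeasurable).mpr ?_
  simpa [pow_two] using hGsq

end Stmt4Aux



/-- Let `U` and `U'` be independent vectors, each with independent components distributed
according to `ν`, realized as the two coordinates of the product space.  For
`C(i) = Cov(f(U), f(W_i))`, where `W_i` agrees with `U'` on the first `i` components and
with `U` on the rest, `C` is decreasing in `i`; in particular `C (i+1) ≤ C i`. -/
theorem stmt_4 {d : ℕ} {F : Type*} [MeasurableSpace F] (ν : Fin d → Measure F)
    [∀ k, IsProbabilityMeasure (ν k)]
    (f : (Fin d → F) → ℝ) (hfm : Measurable f)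
    (hf2 : MemLp f 2 (Measure.pi ν))
    (C : ℕ → ℝ)
    (hC : ∀ i, C i =
      (∫ p, f p.1 * f (fun j : Fin d => if (j : ℕ) < i then p.2 j else p.1 j)
          ∂(Measure.pi ν).prod (Measure.pi ν))
        - (∫ x, f x ∂Measure.pi ν) * ∫ x, f x ∂Measure.pi ν) :
    (∀ i j, i ≤ j → j ≤ d → C j ≤ C i) ∧ ∀ i < d, C (i + 1) ≤ C i := by

  have winv : ∀ k m : ℕ, k ≤ m → ∀ q : (Fin d → F) × (Fin d → F),
      Stmt4Aux.gf ν f m (Stmt4Aux.wmap k q) = Stmt4Aux.gf ν f m q.1 := by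
    intro k m hkm q
    unfold Stmt4Aux.gf
    refine integral_congr_ae (Filter.Eventually.of_forall fun y => ?_)
    have hw : Stmt4Aux.wmap m (Stmt4Aux.wmap k q, y) = Stmt4Aux.wmap m (q.1, y) := by
      funext j
      by_cases h : (j : ℕ) < m
      · simp [Stmt4Aux.wmap, h]
      · have h' : ¬ (j : ℕ) < k := fun hh => h (lt_of_lt_of_le hh hkm)
        simp [Stmt4Aux.wmap, h, h']
    simp only [hw]
  have hstep : ∀ i : ℕ, C (i + 1) ≤ C i := by
    intro i
    have hg1m : Measurable (Stmt4Aux.gf ν f i) := (Stmt4Aux.gf_sm hfm i).measurable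
    have hg2m : Measurable (Stmt4Aux.gf ν f (i + 1)) := (Stmt4Aux.gf_sm hfm (i + 1)).measurable
    have hg1 : MemLp (Stmt4Aux.gf ν f i) 2 (Measure.pi ν) := Stmt4Aux.gf_mem hfm hf2 i
    have hg2 : MemLp (Stmt4Aux.gf ν f (i + 1)) 2 (Measure.pi ν) := Stmt4Aux.gf_mem hfm hf2 (i + 1)
    have e1 : ∫ x, Stmt4Aux.gf ν f i x * Stmt4Aux.gf ν f i x ∂(Measure.pi ν)
        = ∫ x, Stmt4Aux.gf ν f i x * f x ∂(Measure.pi ν) :=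
      Stmt4Aux.key hfm hf2 _ hg1m hg1 i (winv i i le_rfl)
    have e2 : ∫ x, Stmt4Aux.gf ν f (i + 1) x * Stmt4Aux.gf ν f i x ∂(Measure.pi ν)
        = ∫ x, Stmt4Aux.gf ν f (i + 1) x * f x ∂(Measure.pi ν) :=
      Stmt4Aux.key hfm hf2 _ hg2m hg2 i (winv i (i + 1) (Nat.le_succ i))
    have e3 : ∫ x, Stmt4Aux.gf ν f (i + 1) x * Stmt4Aux.gf ν f (i + 1) x ∂(Measure.pi ν)
        = ∫ x, Stmt4Aux.gf ν f (i + 1) x * f x ∂(Measure.pi ν) :=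
      Stmt4Aux.key hfm hf2 _ hg2m hg2 (i + 1) (winv (i + 1) (i + 1) le_rfl)
    have a1 : ∫ q, f q.1 * f (Stmt4Aux.wmap i q) ∂((Measure.pi ν).prod (Measure.pi ν))
        = ∫ x, f x * Stmt4Aux.gf ν f i x ∂(Measure.pi ν) := Stmt4Aux.fub hfm hf2 f hfm hf2 i
    have a2 : ∫ q, f q.1 * f (Stmt4Aux.wmap (i + 1) q) ∂((Measure.pi ν).prod (Measure.pi ν))
        = ∫ x, f x * Stmt4Aux.gf ν f (i + 1) x ∂(Measure.pi ν) := Stmt4Aux.fub hfm hf2 f hfm hf2 (i + 1)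
    have c1 : ∫ x, f x * Stmt4Aux.gf ν f i x ∂(Measure.pi ν)
        = ∫ x, Stmt4Aux.gf ν f i x * f x ∂(Measure.pi ν) :=
      integral_congr_ae (Filter.Eventually.of_forall fun x => mul_comm _ _)
    have c2 : ∫ x, f x * Stmt4Aux.gf ν f (i + 1) x ∂(Measure.pi ν)
        = ∫ x, Stmt4Aux.gf ν f (i + 1) x * f x ∂(Measure.pi ν) :=
      integral_congr_ae (Filter.Eventually.of_forall fun x => mul_comm _ _)
    have i11 : Integrable (fun x => Stmt4Aux.gf ν f i x * Stmt4Aux.gf ν f i x) (Measure.pi ν) :=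
      Stmt4Aux.integrable_mul₂ hg1 hg1
    have i21 : Integrable (fun x => Stmt4Aux.gf ν f (i + 1) x * Stmt4Aux.gf ν f i x) (Measure.pi ν) :=
      Stmt4Aux.integrable_mul₂ hg2 hg1
    have i22 : Integrable (fun x => Stmt4Aux.gf ν f (i + 1) x * Stmt4Aux.gf ν f (i + 1) x) (Measure.pi ν) :=
      Stmt4Aux.integrable_mul₂ hg2 hg2
    have hd : Integrable
        (fun x => Stmt4Aux.gf ν f i x * Stmt4Aux.gf ν f i x - 2 * (Stmt4Aux.gf ν f (i + 1) x * Stmt4Aux.gf ν f i x))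
        (Measure.pi ν) := i11.sub (i21.const_mul 2)
    have expand : ∫ x, (Stmt4Aux.gf ν f i x - Stmt4Aux.gf ν f (i + 1) x) * (Stmt4Aux.gf ν f i x - Stmt4Aux.gf ν f (i + 1) x)
          ∂(Measure.pi ν)
        = (∫ x, Stmt4Aux.gf ν f i x * Stmt4Aux.gf ν f i x ∂(Measure.pi ν)
            - 2 * ∫ x, Stmt4Aux.gf ν f (i + 1) x * Stmt4Aux.gf ν f i x ∂(Measure.pi ν))
          + ∫ x, Stmt4Aux.gf ν f (i + 1) x * Stmt4Aux.gf ν f (i + 1) x ∂(Measure.pi ν) := by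
      have hexp : (fun x => (Stmt4Aux.gf ν f i x - Stmt4Aux.gf ν f (i + 1) x) * (Stmt4Aux.gf ν f i x - Stmt4Aux.gf ν f (i + 1) x))
          = fun x => (Stmt4Aux.gf ν f i x * Stmt4Aux.gf ν f i x - 2 * (Stmt4Aux.gf ν f (i + 1) x * Stmt4Aux.gf ν f i x))
            + Stmt4Aux.gf ν f (i + 1) x * Stmt4Aux.gf ν f (i + 1) x := by
        funext x; ring
      rw [hexp, integral_add hd i22, integral_sub i11 (i21.const_mul 2), integral_const_mul]
    have pos : 0 ≤ ∫ x, (Stmt4Aux.gf ν f i x - Stmt4Aux.gf ν f (i + 1) x) * (Stmt4Aux.gf ν f i x - Stmt4Aux.gf ν f (i + 1) x)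
        ∂(Measure.pi ν) := integral_nonneg fun x => mul_self_nonneg _
    have hCi : C i = (∫ q, f q.1 * f (Stmt4Aux.wmap i q) ∂((Measure.pi ν).prod (Measure.pi ν)))
        - (∫ x, f x ∂Measure.pi ν) * ∫ x, f x ∂Measure.pi ν := hC i
    have hCi1 : C (i + 1)
        = (∫ q, f q.1 * f (Stmt4Aux.wmap (i + 1) q) ∂((Measure.pi ν).prod (Measure.pi ν)))
        - (∫ x, f x ∂Measure.pi ν) * ∫ x, f x ∂Measure.pi ν := hC (i + 1)
    linarith [pos, expand, e1, e2, e3, a1, a2, c1, c2, hCi, hCi1]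
  constructor
  · intro i j hij hjd
    clear hjd
    induction hij with
    | refl => exact le_refl _
    | step h ih => exact le_trans (hstep _) ih
  · exact fun i _ => hstep i
end
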